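/- If u₀* ∈ H is the minimizer of J and ψ = ℒ*(ℒu₀* − u_T), then for μ-almost every x one has u₀*(x) = −sign(ψ(x)) · max((|ψ(x)| − β)/τ, 0), where sign(t) = t/|t| for t ≠ 0 and sign(0) = 0. -/

import Mathlib

open MeasureTheory

/-- The soft-thresholding function, written in a form convenient for Lipschitz estimates. -/
noncomputable def softTh (τ β t : ℝ) : ℝ := -(max (t - β) 0 + min (t + β) 0) / τ

lemma softTh_zero (τ β : ℝ) (hβ : 0 ≤ β) : softTh τ β 0 = 0 := by
  simp [softTh, max_eq_right, min_eq_right, hβ, neg_nonpos.mpr hβ]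

lemma softTh_lipschitz {τ : ℝ} (β : ℝ) (hτ : 0 < τ) :
    LipschitzWith (2 / τ).toNNReal (softTh τ β) := by
  apply LipschitzWith.of_dist_le_mul
  intro a b
  simp only [Real.dist_eq, softTh]
  rw [Real.coe_toNNReal _ (by positivity)]
  have h1 : |max (a - β) 0 - max (b - β) 0| ≤ |a - b| := by
    have := abs_max_sub_max_le_abs (a - β) (b - β) 0
    calc |max (a - β) 0 - max (b - β) 0| ≤ |(a - β) - (b - β)| := this
      _ = |a - b| := by ring_nf
  have h2 : |min (a + β) 0 - min (b + β) 0| ≤ |a - b| := by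
    have key : ∀ x y : ℝ, min x 0 - min y 0 = -(max (-x) 0 - max (-y) 0) := by
      intro x y
      rcases le_total x 0 with hx | hx <;> rcases le_total y 0 with hy | hy <;>
        simp [min_eq_left, min_eq_right, max_eq_left, max_eq_right, hx, hy,
          neg_nonneg.mpr, neg_nonpos.mpr] <;> linarith
    rw [key, abs_neg]
    calc |max (-(a+β)) 0 - max (-(b+β)) 0| ≤ |(-(a+β)) - (-(b+β))| :=
          abs_max_sub_max_le_abs _ _ _
      _ = |b - a| := by ring_nf
      _ = |a - b| := abs_sub_comm _ _
  have e : -(max (a - β) 0 + min (a + β) 0) / τ - -(max (b - β) 0 + min (b + β) 0) / τ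
      = ((max (b - β) 0 - max (a - β) 0) + (min (b + β) 0 - min (a + β) 0)) / τ := by ring
  rw [e, abs_div, abs_of_pos hτ, div_le_iff₀ hτ]
  have h1' : |max (b - β) 0 - max (a - β) 0| ≤ |a - b| := by
    rw [abs_sub_comm]; exact h1
  have h2' : |min (b + β) 0 - min (a + β) 0| ≤ |a - b| := by
    rw [abs_sub_comm]; exact h2
  calc |(max (b - β) 0 - max (a - β) 0) + (min (b + β) 0 - min (a + β) 0)|
      ≤ |max (b - β) 0 - max (a - β) 0| + |min (b + β) 0 - min (a + β) 0| := abs_add_le _ _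
    _ ≤ |a - b| + |a - b| := add_le_add h1' h2'
    _ = 2 / τ * |a - b| * τ := by field_simp; ring

lemma softTh_eq_sign {τ β : ℝ} (hτ : 0 < τ) (hβ : 0 ≤ β) (t : ℝ) :
    softTh τ β t = -Real.sign t * max ((|t| - β) / τ) 0 := by
  rcases lt_trichotomy t 0 with h | h | h
  · rw [Real.sign_of_neg h, abs_of_neg h, softTh]
    have e1 : max (t - β) 0 = 0 := max_eq_right (by linarith)
    rw [e1]
    have : max ((-t - β) / τ) 0 = max (-t - β) 0 / τ := by
      rcases le_total (-t - β) 0 with hc | hc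
      · rw [max_eq_right (div_nonpos_of_nonpos_of_nonneg hc hτ.le), max_eq_right hc, zero_div]
      · rw [max_eq_left (div_nonneg hc hτ.le), max_eq_left hc]
    rw [this]
    rcases le_total (t + β) 0 with h2 | h2
    · rw [min_eq_left h2, max_eq_left (by linarith)]; ring
    · rw [min_eq_right h2, max_eq_right (by linarith)]; ring
  · subst h
    simp [softTh, max_eq_right hβ, min_eq_right hβ, neg_nonpos.mpr hβ]
  · rw [Real.sign_of_pos h, abs_of_pos h, softTh]
    have e2 : min (t + β) 0 = 0 := min_eq_right (by linarith)
    rw [e2]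
    have : max ((t - β) / τ) 0 = max (t - β) 0 / τ := by
      rcases le_total (t - β) 0 with hc | hc
      · rw [max_eq_right (div_nonpos_of_nonpos_of_nonneg hc hτ.le), max_eq_right hc, zero_div]
      · rw [max_eq_left (div_nonneg hc hτ.le), max_eq_left hc]
    rw [this]; ring

lemma softTh_key {τ β : ℝ} (hτ : 0 < τ) (hβ : 0 < β) (t s : ℝ) :
    t * softTh τ β t + τ / 2 * (softTh τ β t) ^ 2 + β * |softTh τ β t|
      + τ / 2 * (s - softTh τ β t) ^ 2
    ≤ t * s + τ / 2 * s ^ 2 + β * |s| := by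
  set h := softTh τ β t with hh
  have hcond : |t + τ * h| ≤ β ∧ (t + τ * h) * h = -(β * |h|) := by
    have hτh : τ * h = -(max (t - β) 0 + min (t + β) 0) := by
      rw [hh, softTh, mul_div_cancel₀ _ hτ.ne']
    rcases le_total β t with h1 | h1
    · have e1 : max (t - β) 0 = t - β := max_eq_left (by linarith)
      have e2 : min (t + β) 0 = 0 := min_eq_right (by linarith)
      rw [e1, e2] at hτh
      have hneg : h ≤ 0 := by
        rw [hh, softTh, e1, e2]
        apply div_nonpos_of_nonpos_of_nonneg (by linarith) hτ.le
      constructor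
      · rw [show t + τ * h = β by rw [hτh]; ring, abs_of_pos hβ]
      · rw [abs_of_nonpos hneg]; nlinarith [hτh]
    rcases le_total t (-β) with h2 | h2
    · have e1 : max (t - β) 0 = 0 := max_eq_right (by linarith)
      have e2 : min (t + β) 0 = t + β := min_eq_left (by linarith)
      rw [e1, e2] at hτh
      have hpos : 0 ≤ h := by
        rw [hh, softTh, e1, e2]
        apply div_nonneg (by linarith) hτ.le
      constructor
      · rw [show t + τ * h = -β by rw [hτh]; ring, abs_neg, abs_of_pos hβ]
      · rw [abs_of_nonneg hpos]; nlinarith [hτh]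
    · have e1 : max (t - β) 0 = 0 := max_eq_right (by linarith)
      have e2 : min (t + β) 0 = 0 := min_eq_right (by linarith)
      have h0 : h = 0 := by rw [hh, softTh, e1, e2]; simp
      rw [h0]
      constructor
      · rw [mul_zero, add_zero, abs_le]; constructor <;> linarith
      · simp
  obtain ⟨h1, h2⟩ := hcond
  have hpos : 0 ≤ (t + τ * h) * s + β * |s| := by
    obtain ⟨hl, hr⟩ := abs_le.mp h1
    rcases le_total 0 s with hs | hs
    · rw [abs_of_nonneg hs]; nlinarith
    · rw [abs_of_nonpos hs]; nlinarith
  nlinarith [hpos, h2]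

/-- The cost functional `J(u₀) = ½‖ℒu₀ − u_T‖² + (τ/2)‖u₀‖² + β∫|u₀| dμ` on `H = L²(μ; ℝ)`. -/
noncomputable def J {X : Type*} [MeasurableSpace X] (μ : Measure X)
    (L : Lp ℝ 2 μ →L[ℝ] Lp ℝ 2 μ) (uT : Lp ℝ 2 μ) (τ β : ℝ) (u₀ : Lp ℝ 2 μ) : ℝ :=
  (1 / 2) * ‖L u₀ - uT‖ ^ 2 + (τ / 2) * ‖u₀‖ ^ 2 + β * ∫ x, |u₀ x| ∂μ

set_option maxHeartbeats 1000000

/-- Soft-thresholding characterization of the minimizer: with `ψ = ℒ*(ℒu₀* − u_T)`,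
for a.e. `x`, `u₀*(x) = −sign(ψ(x)) · max((|ψ(x)| − β)/τ, 0)`
(Real.sign satisfies `sign t = t/|t|` for `t ≠ 0` and `sign 0 = 0`). -/
theorem minimizer_soft_thresholding {X : Type*} [MeasurableSpace X] (μ : Measure X)
    [IsFiniteMeasure μ] (L : Lp ℝ 2 μ →L[ℝ] Lp ℝ 2 μ) (uT : Lp ℝ 2 μ)
    (τ β : ℝ) (hτ : 0 < τ) (hβ : 0 < β) (u₀star : Lp ℝ 2 μ)
    (hmin : ∀ u₀ : Lp ℝ 2 μ, J μ L uT τ β u₀star ≤ J μ L uT τ β u₀)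
    (ψ : Lp ℝ 2 μ) (hψ : ψ = L.adjoint (L u₀star - uT)) :
    ∀ᵐ x ∂μ, u₀star x = -Real.sign (ψ x) * max ((|ψ x| - β) / τ) 0 := by
  have hg : LipschitzWith (2 / τ).toNNReal (softTh τ β) := softTh_lipschitz β hτ
  have hg0 : softTh τ β 0 = 0 := softTh_zero τ β hβ.le
  set w : Lp ℝ 2 μ := hg.compLp hg0 ψ with hwdef
  have hw : ∀ᵐ x ∂μ, w x = softTh τ β (ψ x) := hg.coeFn_compLp hg0 ψ
  -- integrability helpers
  have intMul : ∀ u v : Lp ℝ 2 μ, Integrable (fun x => u x * v x) μ := by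
    intro u v
    simpa [RCLike.inner_apply, conj_trivial] using L2.integrable_inner (𝕜 := ℝ) v u
  have intAbs : ∀ u : Lp ℝ 2 μ, Integrable (fun x => |u x|) μ := fun u =>
    ((Lp.memLp u).integrable one_le_two).abs
  -- the reduced functional Φ
  set Φ : Lp ℝ 2 μ → ℝ :=
    fun u => (inner ℝ ψ u : ℝ) + τ / 2 * ‖u‖ ^ 2 + β * ∫ x, |u x| ∂μ with hΦ
  -- Step A: expansion of J around u₀star
  have hexp : ∀ u : Lp ℝ 2 μ,
      J μ L uT τ β u = (1 / 2 * ‖L u₀star - uT‖ ^ 2 - (inner ℝ ψ u₀star : ℝ)) + Φ u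
        + 1 / 2 * ‖L (u - u₀star)‖ ^ 2 := by
    intro u
    have hsplit : L u - uT = (L u₀star - uT) + L (u - u₀star) := by
      rw [map_sub]; abel
    have hinner : (inner ℝ ψ (u - u₀star) : ℝ) = inner ℝ (L u₀star - uT) (L (u - u₀star)) := by
      rw [hψ]; exact ContinuousLinearMap.adjoint_inner_left L (u - u₀star) (L u₀star - uT)
    have hn : ‖L u - uT‖ ^ 2 = ‖L u₀star - uT‖ ^ 2
        + 2 * ((inner ℝ ψ u : ℝ) - (inner ℝ ψ u₀star : ℝ)) + ‖L (u - u₀star)‖ ^ 2 := by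
      rw [hsplit, norm_add_sq_real, ← hinner, inner_sub_right]
    simp only [J, hΦ]
    rw [hn]; ring
  -- Step A': reduced minimality
  have hmin' : ∀ u : Lp ℝ 2 μ, Φ u₀star ≤ Φ u + 1 / 2 * ‖L (u - u₀star)‖ ^ 2 := by
    intro u
    have h := hmin u
    rw [hexp u, hexp u₀star] at h
    have h0 : L (u₀star - u₀star) = 0 := by rw [sub_self, map_zero]
    rw [h0, norm_zero] at h
    nlinarith [h]
  set d : Lp ℝ 2 μ := w - u₀star with hd
  have hwd : w = u₀star + d := by rw [hd]; abel
  -- Step B: Φ u₀star ≤ Φ w + t * (½‖L d‖²) for all t ∈ (0,1]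
  have hB : ∀ t : ℝ, 0 < t → t ≤ 1 → Φ u₀star ≤ Φ w + t * (1 / 2 * ‖L d‖ ^ 2) := by
    intro t ht ht1
    have key := hmin' (u₀star + t • d)
    have hLd : ‖L (u₀star + t • d - u₀star)‖ ^ 2 = t ^ 2 * ‖L d‖ ^ 2 := by
      rw [add_sub_cancel_left, _root_.map_smul, norm_smul, Real.norm_eq_abs, abs_of_pos ht, mul_pow]
    have einner : (inner ℝ ψ (u₀star + t • d) : ℝ)
        = (inner ℝ ψ u₀star : ℝ) + t * (inner ℝ ψ d : ℝ) := by
      rw [inner_add_right, real_inner_smul_right]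
    have enorm : ‖u₀star + t • d‖ ^ 2
        = ‖u₀star‖ ^ 2 + 2 * (t * (inner ℝ u₀star d : ℝ)) + t ^ 2 * ‖d‖ ^ 2 := by
      rw [norm_add_sq_real, real_inner_smul_right, norm_smul, Real.norm_eq_abs,
        abs_of_pos ht, mul_pow]
    have einnerw : (inner ℝ ψ w : ℝ) = (inner ℝ ψ u₀star : ℝ) + (inner ℝ ψ d : ℝ) := by
      rw [hwd, inner_add_right]
    have enormw : ‖w‖ ^ 2 = ‖u₀star‖ ^ 2 + 2 * (inner ℝ u₀star d : ℝ) + ‖d‖ ^ 2 := by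
      rw [hwd, norm_add_sq_real]
    have hptAe : ∀ᵐ x ∂μ, (u₀star + t • d) x = u₀star x + t * d x := by
      filter_upwards [Lp.coeFn_add u₀star (t • d), Lp.coeFn_smul t d] with x h1 h2
      rw [h1, Pi.add_apply, h2, Pi.smul_apply, smul_eq_mul]
    have hdAe : ∀ᵐ x ∂μ, d x = w x - u₀star x := by
      filter_upwards [Lp.coeFn_sub w u₀star] with x h1
      rw [hd]
      rw [h1, Pi.sub_apply]
    have hIntBound : ∫ x, |(u₀star + t • d) x| ∂μ
        ≤ (1 - t) * ∫ x, |u₀star x| ∂μ + t * ∫ x, |w x| ∂μ := by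
      have step : ∫ x, |(u₀star + t • d) x| ∂μ
          ≤ ∫ x, ((1 - t) * |u₀star x| + t * |w x|) ∂μ := by
        apply integral_mono_ae (intAbs _)
          (((intAbs u₀star).const_mul (1 - t)).add ((intAbs w).const_mul t))
        filter_upwards [hptAe, hdAe] with x h1 h2
        rw [h1, h2]
        have e : u₀star x + t * (w x - u₀star x) = (1 - t) * u₀star x + t * w x := by ring
        rw [e]
        calc |(1 - t) * u₀star x + t * w x|
            ≤ |(1 - t) * u₀star x| + |t * w x| := abs_add_le _ _
          _ = (1 - t) * |u₀star x| + t * |w x| := by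
              rw [abs_mul, abs_mul, abs_of_nonneg (by linarith : (0:ℝ) ≤ 1 - t),
                abs_of_pos ht]
      rwa [integral_add ((intAbs u₀star).const_mul _) ((intAbs w).const_mul _),
        integral_const_mul, integral_const_mul] at step
    rw [hLd] at key
    simp only [hΦ] at key ⊢
    rw [einner, enorm] at key
    rw [einnerw, enormw]
    have hbb : β * ∫ x, |(u₀star + t • d) x| ∂μ
        ≤ β * ((1 - t) * ∫ x, |u₀star x| ∂μ + t * ∫ x, |w x| ∂μ) :=
      mul_le_mul_of_nonneg_left hIntBound hβ.le
    set IA := ∫ x, |u₀star x| ∂μ with hIA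
    set IB := ∫ x, |w x| ∂μ with hIB
    set IT := ∫ x, |(u₀star + t • d) x| ∂μ with hIT
    set P := (inner ℝ ψ d : ℝ) with hPd
    set Q := (inner ℝ u₀star d : ℝ) with hQd
    set I0 := (inner ℝ ψ u₀star : ℝ) with hI0
    set D := ‖d‖ ^ 2 with hDd
    set M := ‖L d‖ ^ 2 with hMd
    set N := ‖u₀star‖ ^ 2 with hNd
    have hD : (0:ℝ) ≤ D := by rw [hDd]; positivity
    have hM : (0:ℝ) ≤ M := by rw [hMd]; positivity
    have h0 : 0 ≤ t * ((P + τ * Q + β * IB - β * IA)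
        + t * (τ / 2 * D + 1 / 2 * M)) := by linarith [key, hbb]
    have h1 : 0 ≤ (P + τ * Q + β * IB - β * IA)
        + t * (τ / 2 * D + 1 / 2 * M) := by
      by_contra hneg
      push_neg at hneg
      nlinarith [h0, mul_pos ht (neg_pos.mpr hneg)]
    have h2 : t * (τ / 2 * D) ≤ τ / 2 * D := by
      calc t * (τ / 2 * D) ≤ 1 * (τ / 2 * D) :=
            mul_le_mul_of_nonneg_right ht1 (mul_nonneg (by linarith) hD)
        _ = τ / 2 * D := one_mul _
    nlinarith [h1, h2]
  -- limit t → 0⁺ : Φ u₀star ≤ Φ w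
  have hΦle : Φ u₀star ≤ Φ w := by
    by_contra hc
    push_neg at hc
    set M := 1 / 2 * ‖L d‖ ^ 2 with hM
    have hM0 : (0:ℝ) ≤ M := by positivity
    set ε := Φ u₀star - Φ w with hε
    have hε0 : 0 < ε := sub_pos.mpr hc
    set t := min 1 (ε / (2 * (M + 1))) with htdef
    have ht0 : 0 < t := lt_min one_pos (by positivity)
    have ht1 : t ≤ 1 := min_le_left _ _
    have hBt := hB t ht0 ht1
    have htM : t * M ≤ ε / 2 := by
      have h2 : t ≤ ε / (2 * (M + 1)) := min_le_right _ _
      have h3 : t * (M + 1) ≤ ε / (2 * (M + 1)) * (M + 1) :=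
        mul_le_mul_of_nonneg_right h2 (by linarith)
      have h4 : ε / (2 * (M + 1)) * (M + 1) = ε / 2 := by field_simp
      nlinarith
    linarith
  -- Step C: strong convexity of Φ via the pointwise inequality
  have intSq : Integrable (fun x => (u₀star x - w x) * (u₀star x - w x)) μ := by
    apply (intMul (u₀star - w) (u₀star - w)).congr
    filter_upwards [Lp.coeFn_sub u₀star w] with x h1
    rw [h1, Pi.sub_apply]
  have eΦ : ∀ u : Lp ℝ 2 μ,
      Φ u = ∫ x, (ψ x * u x + τ / 2 * (u x * u x) + β * |u x|) ∂μ := by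
    intro u
    have e1 : (inner ℝ ψ u : ℝ) = ∫ x, ψ x * u x ∂μ := by
      rw [L2.inner_def]; simp [RCLike.inner_apply, conj_trivial, mul_comm]
    have e2 : ‖u‖ ^ 2 = ∫ x, u x * u x ∂μ := by
      rw [← real_inner_self_eq_norm_sq, L2.inner_def]
      simp [RCLike.inner_apply, conj_trivial, sq]
    have i1 : Integrable (fun x => ψ x * u x + τ / 2 * (u x * u x)) μ :=
      (intMul ψ u).add ((intMul u u).const_mul (τ / 2))
    have i2 : Integrable (fun x => β * |u x|) μ := (intAbs u).const_mul β
    have hsplit : ∫ x, (ψ x * u x + τ / 2 * (u x * u x) + β * |u x|) ∂μ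
        = (∫ x, ψ x * u x ∂μ) + τ / 2 * (∫ x, u x * u x ∂μ) + β * ∫ x, |u x| ∂μ := by
      rw [integral_add i1 i2, integral_add (intMul ψ u) ((intMul u u).const_mul (τ / 2)),
        integral_const_mul, integral_const_mul]
    simp only [hΦ]
    rw [e1, e2, hsplit]
  have esq : ‖u₀star - w‖ ^ 2 = ∫ x, (u₀star x - w x) * (u₀star x - w x) ∂μ := by
    rw [← real_inner_self_eq_norm_sq, L2.inner_def]
    simp only [RCLike.inner_apply, conj_trivial]
    apply integral_congr_ae
    filter_upwards [Lp.coeFn_sub u₀star w] with x h1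
    rw [h1, Pi.sub_apply]
  have hC : Φ w + τ / 2 * ‖u₀star - w‖ ^ 2 ≤ Φ u₀star := by
    have iW : Integrable (fun x => ψ x * w x + τ / 2 * (w x * w x) + β * |w x|) μ :=
      ((intMul ψ w).add ((intMul w w).const_mul (τ / 2))).add ((intAbs w).const_mul β)
    have iU : Integrable
        (fun x => ψ x * u₀star x + τ / 2 * (u₀star x * u₀star x) + β * |u₀star x|) μ :=
      ((intMul ψ u₀star).add ((intMul u₀star u₀star).const_mul (τ / 2))).add
        ((intAbs u₀star).const_mul β)
    have iS : Integrable (fun x => τ / 2 * ((u₀star x - w x) * (u₀star x - w x))) μ :=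
      intSq.const_mul (τ / 2)
    have hsplit : ∫ x, ((ψ x * w x + τ / 2 * (w x * w x) + β * |w x|)
          + τ / 2 * ((u₀star x - w x) * (u₀star x - w x))) ∂μ
        = (∫ x, (ψ x * w x + τ / 2 * (w x * w x) + β * |w x|) ∂μ)
          + τ / 2 * ∫ x, (u₀star x - w x) * (u₀star x - w x) ∂μ := by
      rw [integral_add iW iS, integral_const_mul]
    rw [eΦ w, eΦ u₀star, esq, ← hsplit]
    apply integral_mono_ae (iW.add iS) iU
    filter_upwards [hw] with x hx
    simp only [Pi.add_apply]
    rw [hx]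
    have hk := softTh_key hτ hβ (ψ x) (u₀star x)
    nlinarith [hk]
  -- conclude u₀star = w
  have hzero : ‖u₀star - w‖ = 0 := by
    have h2 : τ / 2 * ‖u₀star - w‖ ^ 2 ≤ 0 :=
      (add_le_iff_nonpos_right _).mp (le_trans hC hΦle)
    have h3 : ‖u₀star - w‖ ^ 2 ≤ 0 := by nlinarith [h2, sq_nonneg ‖u₀star - w‖]
    have h4 : ‖u₀star - w‖ ^ 2 = 0 := le_antisymm h3 (by positivity)
    exact pow_eq_zero_iff two_ne_zero |>.mp h4
  have heq : u₀star = w := sub_eq_zero.mp (norm_eq_zero.mp hzero)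
  filter_upwards [hw] with x hx
  rw [heq, hx, softTh_eq_sign hτ hβ.le]
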